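/- There is a constant C > 0, independent of σ ∈ (0,2) and ρ > 0, such that ρ² ∫₀^∞ e^{-t^σ} t sin(ρt) dt ≤ C (and the improper integral converges). -/

import Mathlib

open MeasureTheory Real Filter Set

open Topology

lemma aux_int {p q : ℝ} (hp : 0 < p) (hq : -1 < q) :
    IntegrableOn (fun x : ℝ => x ^ q * Real.exp (-(x ^ p))) (Ioi 0) := by
  have h := (integrableOn_Ioi_comp_rpow_iff'
      (fun u : ℝ => Real.exp (-u) * u ^ ((q + 1) / p - 1)) (p := p) hp.ne').mpr
      (Real.GammaIntegral_convergent (div_pos (by linarith) hp))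
  refine (integrableOn_congr_fun (fun x hx => ?_) measurableSet_Ioi).mp h
  have hx : (0:ℝ) < x := hx
  have h1 : (x ^ p) ^ ((q + 1) / p - 1) = x ^ (q + 1 - p) := by
    rw [← Real.rpow_mul hx.le]; congr 1; field_simp
  simp only [smul_eq_mul, h1]
  rw [mul_comm (Real.exp _), ← mul_assoc, ← Real.rpow_add hx]
  ring_nf

section pieces
variable {σ ρ : ℝ}

lemma hc_pow (hσ0 : 0 < σ) : Continuous fun t : ℝ => t ^ σ :=
  continuous_iff_continuousAt.mpr fun x => Real.continuousAt_rpow_const x σ (Or.inr hσ0.le)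

-- derivative of the antiderivative G
lemma hderG (hσ0 : 0 < σ) {x : ℝ} (hx : 0 < x) :
    HasDerivAt (fun t : ℝ =>
        -(ρ * ((t * Real.exp (-(t ^ σ))) * Real.cos (ρ * t))) +
          (Real.exp (-(t ^ σ)) * (1 - σ * t ^ σ)) * Real.sin (ρ * t))
      ((ρ ^ 2 * (x * Real.exp (-(x ^ σ))) +
        -(σ * x ^ (σ - 1) * (Real.exp (-(x ^ σ)) * (1 + σ - σ * x ^ σ)))) * Real.sin (ρ * x)) x := by
  have hpow : HasDerivAt (fun t : ℝ => t ^ σ) (σ * x ^ (σ - 1)) x := by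
    simpa [mul_comm] using Real.hasDerivAt_rpow_const (x := x) (p := σ) (Or.inl hx.ne')
  have hexp : HasDerivAt (fun t : ℝ => Real.exp (-(t ^ σ)))
      (Real.exp (-(x ^ σ)) * (-(σ * x ^ (σ - 1)))) x := hpow.neg.exp
  have hh : HasDerivAt (fun t : ℝ => t * Real.exp (-(t ^ σ)))
      (1 * Real.exp (-(x ^ σ)) + x * (Real.exp (-(x ^ σ)) * (-(σ * x ^ (σ - 1))))) x :=
    (hasDerivAt_id x).mul hexp
  have hh1 : HasDerivAt (fun t : ℝ => Real.exp (-(t ^ σ)) * (1 - σ * t ^ σ))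
      (Real.exp (-(x ^ σ)) * (-(σ * x ^ (σ - 1))) * (1 - σ * x ^ σ) +
        Real.exp (-(x ^ σ)) * (-(σ * (σ * x ^ (σ - 1))))) x := by
    exact (hexp.mul ((hasDerivAt_const x (1:ℝ)).sub (hpow.const_mul σ))).congr_deriv (by simp only [Pi.sub_apply]; ring)
  have hcos : HasDerivAt (fun t : ℝ => Real.cos (ρ * t)) (-Real.sin (ρ * x) * ρ) x := by
    simpa using ((hasDerivAt_id x).const_mul ρ).cos
  have hsin : HasDerivAt (fun t : ℝ => Real.sin (ρ * t)) (Real.cos (ρ * x) * ρ) x := by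
    simpa using ((hasDerivAt_id x).const_mul ρ).sin
  have hxx : x * x ^ (σ - 1) = x ^ σ := by
    have := Real.rpow_add hx 1 (σ - 1)
    rw [show (1:ℝ) + (σ - 1) = σ by ring, Real.rpow_one] at this
    linarith
  have := (((hh.mul hcos).const_mul ρ).neg).add (hh1.mul hsin)
  refine (this.congr_deriv ?_)
  rw [← hxx]; ring
end pieces


section pieces2
variable {σ ρ : ℝ}

lemma hlimG (hσ0 : 0 < σ) (hρ : 0 < ρ) :
    Tendsto (fun t : ℝ =>
        -(ρ * ((t * Real.exp (-(t ^ σ))) * Real.cos (ρ * t))) +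
          (Real.exp (-(t ^ σ)) * (1 - σ * t ^ σ)) * Real.sin (ρ * t)) atTop (𝓝 0) := by
  have hTpow : Tendsto (fun t : ℝ => t ^ σ) atTop atTop := tendsto_rpow_atTop hσ0
  have hTh : Tendsto (fun t : ℝ => t * Real.exp (-(t ^ σ))) atTop (𝓝 0) := by
    have A := (tendsto_rpow_mul_exp_neg_mul_atTop_nhds_zero (1/σ) 1 one_pos).comp hTpow
    refine A.congr' ?_
    filter_upwards [eventually_gt_atTop (0:ℝ)] with t ht
    show (t ^ σ) ^ (1/σ) * Real.exp (-1 * t ^ σ) = t * Real.exp (-(t ^ σ))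
    rw [← Real.rpow_mul ht.le, mul_one_div, div_self hσ0.ne', Real.rpow_one, neg_one_mul]
  have hTq : Tendsto (fun t : ℝ => t ^ σ * Real.exp (-(t ^ σ))) atTop (𝓝 0) := by
    have A := (tendsto_rpow_mul_exp_neg_mul_atTop_nhds_zero 1 1 one_pos).comp hTpow
    refine A.congr fun t => ?_
    show (t ^ σ) ^ (1:ℝ) * Real.exp (-1 * t ^ σ) = t ^ σ * Real.exp (-(t ^ σ))
    rw [Real.rpow_one, neg_one_mul]
  have hTexp : Tendsto (fun t : ℝ => Real.exp (-(t ^ σ))) atTop (𝓝 0) := by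
    exact Real.tendsto_exp_neg_atTop_nhds_zero.comp hTpow
  have hTh1 : Tendsto (fun t : ℝ => Real.exp (-(t ^ σ)) * (1 - σ * t ^ σ)) atTop (𝓝 0) := by
    have h := hTexp.sub (hTq.const_mul σ)
    simp only [mul_zero, sub_zero] at h
    exact h.congr fun t => by ring
  have hbndT : Tendsto (fun t : ℝ => ρ * |t * Real.exp (-(t ^ σ))| +
      |Real.exp (-(t ^ σ)) * (1 - σ * t ^ σ)|) atTop (𝓝 0) := by
    have := (hTh.abs.const_mul ρ).add hTh1.abs
    simpa using this
  refine squeeze_zero_norm (fun t => ?_) hbndT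
  have hc1 : |Real.cos (ρ * t)| ≤ 1 := Real.abs_cos_le_one _
  have hs1 : |Real.sin (ρ * t)| ≤ 1 := Real.abs_sin_le_one _
  have e1 : ‖-(ρ * ((t * Real.exp (-(t ^ σ))) * Real.cos (ρ * t))) +
      (Real.exp (-(t ^ σ)) * (1 - σ * t ^ σ)) * Real.sin (ρ * t)‖ ≤
      |ρ * ((t * Real.exp (-(t ^ σ))) * Real.cos (ρ * t))| +
      |(Real.exp (-(t ^ σ)) * (1 - σ * t ^ σ)) * Real.sin (ρ * t)| := by
    rw [Real.norm_eq_abs]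
    exact (abs_add_le _ _).trans (by rw [abs_neg])
  refine e1.trans (add_le_add ?_ ?_)
  · rw [abs_mul, abs_mul, abs_of_pos hρ]
    exact mul_le_mul_of_nonneg_left (mul_le_of_le_one_right (abs_nonneg _) hc1) hρ.le
  · rw [abs_mul]
    exact mul_le_of_le_one_right (abs_nonneg _) hs1

end pieces2

section pieces3
variable {σ ρ : ℝ}

lemma hce (hσ0 : 0 < σ) : Continuous fun t : ℝ => Real.exp (-(t ^ σ)) :=
  Real.continuous_exp.comp (hc_pow hσ0).neg

lemma hcontG (hσ0 : 0 < σ) : Continuous (fun t : ℝ =>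
    -(ρ * ((t * Real.exp (-(t ^ σ))) * Real.cos (ρ * t))) +
      (Real.exp (-(t ^ σ)) * (1 - σ * t ^ σ)) * Real.sin (ρ * t)) := by
  refine Continuous.add ?_ ?_
  · exact (continuous_const.mul ((continuous_id.mul (hce hσ0)).mul
      (Real.continuous_cos.comp (continuous_const.mul continuous_id)))).neg
  · exact ((hce hσ0).mul (continuous_const.sub (continuous_const.mul (hc_pow hσ0)))).mul
      (Real.continuous_sin.comp (continuous_const.mul continuous_id))

lemma hint_main (hσ0 : 0 < σ) (ρ : ℝ) :
    IntegrableOn (fun t : ℝ => (t * Real.exp (-(t ^ σ))) * Real.sin (ρ * t)) (Ioi 0) := by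
  have hg := aux_int (q := 1) hσ0 (by norm_num)
  refine Integrable.mono' hg ?_ ?_
  · exact (((continuous_id.mul (hce hσ0)).mul
      (Real.continuous_sin.comp (continuous_const.mul continuous_id))).aestronglyMeasurable).restrict
  · filter_upwards [ae_restrict_mem measurableSet_Ioi] with t ht
    have ht : (0:ℝ) < t := ht
    rw [Real.rpow_one, Real.norm_eq_abs, abs_mul, abs_mul, abs_of_pos ht,
      abs_of_pos (Real.exp_pos _)]
    exact mul_le_of_le_one_right (by positivity) (Real.abs_sin_le_one _)

lemma h2_bound (hσ0 : 0 < σ) {t : ℝ} (ht : 0 < t) :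
    ‖-(σ * t ^ (σ - 1) * (Real.exp (-(t ^ σ)) * (1 + σ - σ * t ^ σ))) * Real.sin (ρ * t)‖ ≤
      σ * (1 + σ) * (t ^ (σ - 1) * Real.exp (-(t ^ σ))) +
        σ * σ * (t ^ (2 * σ - 1) * Real.exp (-(t ^ σ))) := by
  have habs : |1 + σ - σ * t ^ σ| ≤ (1 + σ) + σ * t ^ σ := by
    have h0 : (0:ℝ) ≤ σ * t ^ σ := by positivity
    rw [abs_le]; constructor <;> nlinarith
  have hs1 : |Real.sin (ρ * t)| ≤ 1 := Real.abs_sin_le_one _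
  simp only [Real.norm_eq_abs, abs_mul, abs_neg, abs_of_pos hσ0,
    abs_of_nonneg (Real.rpow_nonneg ht.le (σ - 1)), abs_of_pos (Real.exp_pos (-(t ^ σ)))]
  have h1 : Real.exp (-(t ^ σ)) * |1 + σ - σ * t ^ σ| ≤
      Real.exp (-(t ^ σ)) * ((1 + σ) + σ * t ^ σ) :=
    mul_le_mul_of_nonneg_left habs (Real.exp_pos _).le
  have h2' : σ * t ^ (σ - 1) * (Real.exp (-(t ^ σ)) * |1 + σ - σ * t ^ σ|) * |Real.sin (ρ * t)| ≤
      σ * t ^ (σ - 1) * (Real.exp (-(t ^ σ)) * ((1 + σ) + σ * t ^ σ)) := by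
    refine (mul_le_of_le_one_right (by positivity) hs1).trans ?_
    exact mul_le_mul_of_nonneg_left h1 (by positivity)
  refine h2'.trans ?_
  have hpowadd : t ^ (σ - 1) * t ^ σ = t ^ (2 * σ - 1) := by
    rw [← Real.rpow_add ht]; congr 1; ring
  refine le_of_eq ?_
  rw [← hpowadd]; ring

lemma hg2_int (hσ0 : 0 < σ) :
    IntegrableOn (fun t : ℝ => σ * (1 + σ) * (t ^ (σ - 1) * Real.exp (-(t ^ σ))) +
      σ * σ * (t ^ (2 * σ - 1) * Real.exp (-(t ^ σ)))) (Ioi 0) :=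
  ((aux_int hσ0 (by linarith)).const_mul _).add ((aux_int hσ0 (by linarith)).const_mul _)

lemma hint_h2 (hσ0 : 0 < σ) (ρ : ℝ) :
    IntegrableOn (fun t : ℝ =>
      -(σ * t ^ (σ - 1) * (Real.exp (-(t ^ σ)) * (1 + σ - σ * t ^ σ))) * Real.sin (ρ * t))
      (Ioi 0) := by
  refine Integrable.mono' (hg2_int hσ0) ?_ ?_
  · refine ContinuousOn.aestronglyMeasurable ?_ measurableSet_Ioi
    have hp1 : ContinuousOn (fun t : ℝ => t ^ (σ - 1)) (Ioi 0) := fun x hx =>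
      (Real.continuousAt_rpow_const x _ (Or.inl (ne_of_gt hx))).continuousWithinAt
    refine ContinuousOn.mul ?_
      (Real.continuous_sin.comp (continuous_const.mul continuous_id)).continuousOn
    refine ContinuousOn.neg ?_
    refine ContinuousOn.mul (continuousOn_const.mul hp1) ?_
    exact (hce hσ0).continuousOn.mul
      (continuousOn_const.sub (continuousOn_const.mul (hc_pow hσ0).continuousOn))
  · filter_upwards [ae_restrict_mem measurableSet_Ioi] with t ht
    exact h2_bound hσ0 ht

lemma hg2_val (hσ0 : 0 < σ) :
    ∫ t in Ioi (0:ℝ), (σ * (1 + σ) * (t ^ (σ - 1) * Real.exp (-(t ^ σ))) +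
      σ * σ * (t ^ (2 * σ - 1) * Real.exp (-(t ^ σ)))) = 1 + 2 * σ := by
  rw [integral_add ((aux_int hσ0 (by linarith)).const_mul _)
    ((aux_int hσ0 (by linarith)).const_mul _), integral_const_mul, integral_const_mul,
    integral_rpow_mul_exp_neg_rpow hσ0 (by linarith),
    integral_rpow_mul_exp_neg_rpow hσ0 (by linarith),
    show (σ - 1 + 1) / σ = 1 by field_simp; ring, show (2 * σ - 1 + 1) / σ = 2 by field_simp; ring,
    Real.Gamma_one, Real.Gamma_two]
  field_simp
  ring

end pieces3

/-- there is `C > 0`, independent of `σ ∈ (0,2)` and `ρ > 0`, such that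
`ρ² ∫₀^∞ e^{-t^σ} t sin(ρt) dt ≤ C`, the improper integral converging. -/
theorem stmt7 :
    ∃ C : ℝ, 0 < C ∧ ∀ σ ∈ Ioo (0:ℝ) 2, ∀ ρ : ℝ, 0 < ρ →
      IntegrableOn (fun t : ℝ => Real.exp (-(t ^ σ)) * t * Real.sin (ρ * t)) (Ioi 0) ∧
      ρ^2 * (∫ t in Ioi (0:ℝ), Real.exp (-(t ^ σ)) * t * Real.sin (ρ * t)) ≤ C := by
  refine ⟨5, by norm_num, ?_⟩
  rintro σ ⟨hσ0, hσ2⟩ ρ hρ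
  have hint_f : IntegrableOn (fun t : ℝ => Real.exp (-(t ^ σ)) * t * Real.sin (ρ * t)) (Ioi 0) :=
    (integrableOn_congr_fun (fun t _ => by ring) measurableSet_Ioi).mpr (hint_main hσ0 ρ)
  refine ⟨hint_f, ?_⟩
  have hintG' : IntegrableOn (fun x : ℝ =>
      (ρ ^ 2 * (x * Real.exp (-(x ^ σ))) +
        -(σ * x ^ (σ - 1) * (Real.exp (-(x ^ σ)) * (1 + σ - σ * x ^ σ)))) * Real.sin (ρ * x))
      (Ioi 0) := by
    have h := ((hint_main hσ0 ρ).const_mul (ρ ^ 2)).add (hint_h2 hσ0 ρ)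
    exact (integrableOn_congr_fun (fun x _ => by simp only [Pi.add_apply]; ring)
      measurableSet_Ioi).mpr h
  have hFTC := integral_Ioi_of_hasDerivAt_of_tendsto
    (f := fun t : ℝ => -(ρ * ((t * Real.exp (-(t ^ σ))) * Real.cos (ρ * t))) +
      (Real.exp (-(t ^ σ)) * (1 - σ * t ^ σ)) * Real.sin (ρ * t))
    (hcontG hσ0).continuousWithinAt (fun x hx => hderG hσ0 hx) hintG' (hlimG hσ0 hρ)
  have hG0 : -(ρ * ((0 * Real.exp (-((0:ℝ) ^ σ))) * Real.cos (ρ * 0))) +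
      (Real.exp (-((0:ℝ) ^ σ)) * (1 - σ * (0:ℝ) ^ σ)) * Real.sin (ρ * 0) = 0 := by
    simp
  rw [hG0, zero_sub, neg_zero] at hFTC
  have hsplit : (∫ x in Ioi (0:ℝ),
      (ρ ^ 2 * (x * Real.exp (-(x ^ σ))) +
        -(σ * x ^ (σ - 1) * (Real.exp (-(x ^ σ)) * (1 + σ - σ * x ^ σ)))) * Real.sin (ρ * x)) =
      ρ ^ 2 * (∫ t in Ioi (0:ℝ), (t * Real.exp (-(t ^ σ))) * Real.sin (ρ * t)) +
      ∫ t in Ioi (0:ℝ),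
        -(σ * t ^ (σ - 1) * (Real.exp (-(t ^ σ)) * (1 + σ - σ * t ^ σ))) * Real.sin (ρ * t) := by
    rw [setIntegral_congr_fun measurableSet_Ioi (g := fun x : ℝ =>
      ρ ^ 2 * ((x * Real.exp (-(x ^ σ))) * Real.sin (ρ * x)) +
        -(σ * x ^ (σ - 1) * (Real.exp (-(x ^ σ)) * (1 + σ - σ * x ^ σ))) * Real.sin (ρ * x))
      (fun x _ => by ring),
      integral_add ((hint_main hσ0 ρ).const_mul _) (hint_h2 hσ0 ρ), integral_const_mul]
  have hI1 : (∫ t in Ioi (0:ℝ), Real.exp (-(t ^ σ)) * t * Real.sin (ρ * t)) =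
      ∫ t in Ioi (0:ℝ), (t * Real.exp (-(t ^ σ))) * Real.sin (ρ * t) :=
    setIntegral_congr_fun measurableSet_Ioi fun t _ => by ring
  have hBbd : |∫ t in Ioi (0:ℝ),
      -(σ * t ^ (σ - 1) * (Real.exp (-(t ^ σ)) * (1 + σ - σ * t ^ σ))) * Real.sin (ρ * t)| ≤
      1 + 2 * σ := by
    calc |∫ t in Ioi (0:ℝ),
        -(σ * t ^ (σ - 1) * (Real.exp (-(t ^ σ)) * (1 + σ - σ * t ^ σ))) * Real.sin (ρ * t)|
        = ‖∫ t in Ioi (0:ℝ),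
        -(σ * t ^ (σ - 1) * (Real.exp (-(t ^ σ)) * (1 + σ - σ * t ^ σ))) * Real.sin (ρ * t)‖ :=
          (Real.norm_eq_abs _).symm
      _ ≤ ∫ t in Ioi (0:ℝ),
          ‖-(σ * t ^ (σ - 1) * (Real.exp (-(t ^ σ)) * (1 + σ - σ * t ^ σ))) * Real.sin (ρ * t)‖ :=
          norm_integral_le_integral_norm _
      _ ≤ ∫ t in Ioi (0:ℝ), (σ * (1 + σ) * (t ^ (σ - 1) * Real.exp (-(t ^ σ))) +
            σ * σ * (t ^ (2 * σ - 1) * Real.exp (-(t ^ σ)))) :=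
          setIntegral_mono_on (hint_h2 hσ0 ρ).norm (hg2_int hσ0) measurableSet_Ioi
            (fun t ht => h2_bound hσ0 ht)
      _ = 1 + 2 * σ := hg2_val hσ0
  rw [hsplit] at hFTC
  rw [hI1]
  have := neg_abs_le (∫ t in Ioi (0:ℝ),
      -(σ * t ^ (σ - 1) * (Real.exp (-(t ^ σ)) * (1 + σ - σ * t ^ σ))) * Real.sin (ρ * t))
  linarith
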